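/- Let S be a finite non-nested set of intervals, let t be a natural number, and let j = |{(d, a) ∈ S : d < t}|. If j < |S|, then the pair (d*, a*), where d* is the (j+1)-th smallest departure of S and a* is the (j+1)-th smallest arrival of S, is a member of S, satisfies d* ≥ t, and is the earliest interval of S starting at time t or later: every (d, a) ∈ S with d ≥ t satisfies d* ≤ d and a* ≤ a. (Correctness of the find_next algorithm on the two-bit-vector representation.) -/

import Mathlib

/-- An interval `I = (d, a)` is contained in `I' = (d', a')` if `d' ≤ d` and `a ≤ a'`. -/
def Contained (I I' : ℕ × ℕ) : Prop := I'.1 ≤ I.1 ∧ I.2 ≤ I'.2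

/-- A finite set of intervals is non-nested if no member is contained in a distinct member. -/
def NonNested (S : Finset (ℕ × ℕ)) : Prop :=
  ∀ I ∈ S, ∀ I' ∈ S, I ≠ I' → ¬ Contained I I' ∧ ¬ Contained I' I

/-- The `i`-th smallest element (1-indexed) of a finite set of naturals. -/
def nthSmallest (T : Finset ℕ) (i : ℕ) : ℕ := (T.sort (· ≤ ·)).getD (i - 1) 0

namespace Stmt5Aux

lemma nth_mem_rank (T : Finset ℕ) (k : ℕ) (hk : k < T.card) :
    nthSmallest T (k + 1) ∈ T ∧ (T.filter (· < nthSmallest T (k + 1))).card = k := by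
  set L := T.sort (· ≤ ·) with hL
  have hlen : L.length = T.card := Finset.length_sort _
  have hkL : k < L.length := by omega
  have hget : nthSmallest T (k + 1) = L.get ⟨k, hkL⟩ := by
    simp only [nthSmallest, ← hL, Nat.add_sub_cancel, List.getD,
      List.getElem?_eq_getElem hkL, Option.getD_some, List.get_eq_getElem]
  have hsorted : L.Pairwise (· < ·) := (Finset.sortedLT_sort T).pairwise
  have hmemL : ∀ x, x ∈ L ↔ x ∈ T := fun x => Finset.mem_sort _
  constructor
  · rw [hget, ← hmemL]; exact List.get_mem _ _
  · have hset : T.filter (· < nthSmallest T (k + 1)) =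
        Finset.image (fun i : Fin k => L.get ⟨i, by omega⟩) Finset.univ := by
      ext y
      simp only [Finset.mem_filter, Finset.mem_image, Finset.mem_univ, true_and]
      constructor
      · rintro ⟨hyT, hy⟩
        obtain ⟨i, hi⟩ := List.get_of_mem ((hmemL y).2 hyT)
        refine ⟨⟨i, ?_⟩, hi⟩
        by_contra hik
        push_neg at hik
        have hle : L.get ⟨k, hkL⟩ ≤ L.get i := by
          rcases Nat.eq_or_lt_of_le hik with heq | hlt
          · exact le_of_eq (congrArg L.get (Fin.ext heq))
          · exact le_of_lt (hsorted.rel_get_of_lt hlt)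
        rw [hget] at hy
        rw [hi] at hle
        omega
      · rintro ⟨i, rfl⟩
        refine ⟨(hmemL _).1 (List.get_mem _ _), ?_⟩
        rw [hget]
        exact hsorted.rel_get_of_lt (show ((⟨i, by omega⟩ : Fin L.length) : ℕ) < k from i.2)
    rw [hset, Finset.card_image_of_injective _ ?_, Finset.card_univ, Fintype.card_fin]
    intro a b hab
    by_contra hne
    rcases Ne.lt_or_gt hne with h | h
    · exact absurd hab (ne_of_lt (hsorted.rel_get_of_lt (show (a:ℕ) < (b:ℕ) from h)))
    · exact absurd hab.symm (ne_of_lt (hsorted.rel_get_of_lt (show (b:ℕ) < (a:ℕ) from h)))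

lemma rank_uniq (T : Finset ℕ) {x x' : ℕ} (hx : x ∈ T) (hx' : x' ∈ T)
    (h : (T.filter (· < x)).card = (T.filter (· < x')).card) : x = x' := by
  by_contra hne
  have key : ∀ a b : ℕ, a ∈ T → a < b →
      (T.filter (· < a)).card < (T.filter (· < b)).card := by
    intro a b ha hab
    apply Finset.card_lt_card
    constructor
    · intro y hy
      simp only [Finset.mem_filter] at *
      exact ⟨hy.1, lt_trans hy.2 hab⟩
    · intro hsub
      have := hsub (Finset.mem_filter.2 ⟨ha, hab⟩)
      simp at this
  rcases Ne.lt_or_gt hne with hlt | hlt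
  · exact absurd h (ne_of_lt (key x x' hx hlt))
  · exact absurd h.symm (ne_of_lt (key x' x hx' hlt))

lemma nth_le_of_rank_le (T : Finset ℕ) (k : ℕ) (hk : k < T.card) {y : ℕ} (hy : y ∈ T)
    (h : k ≤ (T.filter (· < y)).card) : nthSmallest T (k + 1) ≤ y := by
  obtain ⟨hmem, hrank⟩ := nth_mem_rank T k hk
  by_contra hlt
  push_neg at hlt
  have h1 : T.filter (· ≤ y) ⊆ T.filter (· < nthSmallest T (k + 1)) := by
    intro z hz
    simp only [Finset.mem_filter] at *
    exact ⟨hz.1, lt_of_le_of_lt hz.2 hlt⟩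
  have h2 : (T.filter (· < y)).card < (T.filter (· ≤ y)).card := by
    apply Finset.card_lt_card
    constructor
    · intro z hz
      simp only [Finset.mem_filter] at *
      exact ⟨hz.1, le_of_lt hz.2⟩
    · intro hsub
      have := hsub (Finset.mem_filter.2 ⟨hy, le_refl y⟩)
      simp at this
  have := Finset.card_le_card h1
  omega

end Stmt5Aux

theorem stmt5 (S : Finset (ℕ × ℕ)) (hval : ∀ I ∈ S, I.1 ≤ I.2) (hnn : NonNested S)
    (t : ℕ) (j : ℕ) (hj : j = (S.filter (fun I => I.1 < t)).card) (hjlt : j < S.card) :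
    (nthSmallest (S.image Prod.fst) (j + 1), nthSmallest (S.image Prod.snd) (j + 1)) ∈ S ∧
    t ≤ nthSmallest (S.image Prod.fst) (j + 1) ∧
    (∀ I ∈ S, t ≤ I.1 →
      nthSmallest (S.image Prod.fst) (j + 1) ≤ I.1 ∧
      nthSmallest (S.image Prod.snd) (j + 1) ≤ I.2) := by
  -- basic order facts from non-nestedness
  have key : ∀ I ∈ S, ∀ I' ∈ S, I ≠ I' →
      (I'.1 ≤ I.1 → I'.2 < I.2) ∧ (I.1 ≤ I'.1 → I.2 < I'.2) := by
    intro I hI I' hI' hne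
    obtain ⟨h1, h2⟩ := hnn I hI I' hI' hne
    unfold Contained at h1 h2
    push_neg at h1 h2
    exact ⟨fun h => by omega, fun h => by omega⟩
  have injf : Set.InjOn Prod.fst (↑S : Set (ℕ × ℕ)) := by
    intro I hI I' hI' h
    by_contra hne
    obtain ⟨k1, k2⟩ := key I hI I' hI' hne
    have := k1 (le_of_eq h.symm); have := k2 (le_of_eq h); omega
  have injs : Set.InjOn Prod.snd (↑S : Set (ℕ × ℕ)) := by
    intro I hI I' hI' h
    by_contra hne
    obtain ⟨k1, k2⟩ := key I hI I' hI' hne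
    rcases le_total I.1 I'.1 with hle | hle
    · have := k2 hle; omega
    · have := k1 hle; omega
  have cardD : (S.image Prod.fst).card = S.card := Finset.card_image_of_injOn injf
  have cardA : (S.image Prod.snd).card = S.card := Finset.card_image_of_injOn injs
  -- rank transfer: counting in image = counting in S
  have cntD : ∀ c, ((S.image Prod.fst).filter (· < c)).card =
      (S.filter (fun I => I.1 < c)).card := by
    intro c
    rw [Finset.filter_image]
    exact Finset.card_image_of_injOn (injf.mono (by intro x hx; exact (Finset.mem_filter.1 hx).1))
  have cntA : ∀ c, ((S.image Prod.snd).filter (· < c)).card =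
      (S.filter (fun I => I.2 < c)).card := by
    intro c
    rw [Finset.filter_image]
    exact Finset.card_image_of_injOn (injs.mono (by intro x hx; exact (Finset.mem_filter.1 hx).1))
  -- for I ∈ S, rank of I.1 among departures = rank of I.2 among arrivals
  have rank_eq : ∀ I ∈ S, (S.filter (fun I' => I'.1 < I.1)).card =
      (S.filter (fun I' => I'.2 < I.2)).card := by
    intro I hI
    congr 1
    apply Finset.filter_congr
    intro I' hI'
    rcases eq_or_ne I' I with rfl | hne
    · simp
    · obtain ⟨k1, k2⟩ := key I' hI' I hI hne
      constructor <;> intro h <;> simp_all <;> omega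
  set d := nthSmallest (S.image Prod.fst) (j + 1) with hd
  set a := nthSmallest (S.image Prod.snd) (j + 1) with ha
  have hjD : j < (S.image Prod.fst).card := by omega
  have hjA : j < (S.image Prod.snd).card := by omega
  obtain ⟨hdmem, hdrank⟩ := Stmt5Aux.nth_mem_rank _ j hjD
  obtain ⟨hamem, harank⟩ := Stmt5Aux.nth_mem_rank _ j hjA
  obtain ⟨I, hI, hI1⟩ := Finset.mem_image.1 hdmem
  rw [← hd] at hdrank hI1
  rw [← ha] at harank
  -- I.2 = a
  have hI2 : I.2 = a := by
    apply Stmt5Aux.rank_uniq (S.image Prod.snd) (Finset.mem_image_of_mem _ hI) hamem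
    rw [cntA, ← rank_eq I hI, ← cntD, hI1, hdrank, harank]
  have hmem : (d, a) ∈ S := by
    have heq : (d, a) = I := Prod.ext hI1.symm hI2.symm
    rwa [heq]
  refine ⟨hmem, ?_, ?_⟩
  · -- t ≤ d
    by_contra h
    push_neg at h
    have hsub : insert I (S.filter (fun I' => I'.1 < d)) ⊆ S.filter (fun I' => I'.1 < t) := by
      intro I' hI'
      rcases Finset.mem_insert.1 hI' with rfl | hI'
      · exact Finset.mem_filter.2 ⟨hI, by omega⟩
      · simp only [Finset.mem_filter] at *
        exact ⟨hI'.1, by omega⟩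
    have hnotin : I ∉ S.filter (fun I' => I'.1 < d) := by
      simp [Finset.mem_filter, hI1]
    have := Finset.card_le_card hsub
    rw [Finset.card_insert_of_notMem hnotin] at this
    rw [cntD] at hdrank
    omega
  · intro I' hI' ht
    have hsub : S.filter (fun I => I.1 < t) ⊆ S.filter (fun I => I.1 < I'.1) := by
      intro z hz
      simp only [Finset.mem_filter] at *
      exact ⟨hz.1, by omega⟩
    have hcard : j ≤ (S.filter (fun I => I.1 < I'.1)).card := by
      rw [hj]; exact Finset.card_le_card hsub
    constructor
    · apply Stmt5Aux.nth_le_of_rank_le _ j hjD (Finset.mem_image_of_mem _ hI')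
      rw [cntD]; exact hcard
    · apply Stmt5Aux.nth_le_of_rank_le _ j hjA (Finset.mem_image_of_mem _ hI')
      rw [cntA, ← rank_eq I' hI']; exact hcard
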